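/- For every integer m ≥ 3, ∑_{i=1}^{m-1} 1/(log(m-1) + i·log(m)) < 1. -/

import Mathlib

private lemma logdiff {x y : ℝ} (hx : 0 < x) (hxy : x ≤ y) :
    (y - x) / y ≤ Real.log y - Real.log x := by
  have hy : 0 < y := lt_of_lt_of_le hx hxy
  have h := Real.log_le_sub_one_of_pos (show (0:ℝ) < x / y from div_pos hx hy)
  rw [Real.log_div hx.ne' hy.ne'] at h
  have h2 : x / y - 1 = -((y - x) / y) := by field_simp; ring
  rw [h2] at h
  linarith

private lemma tele (a L : ℝ) (ha : 0 < a) (hL : 0 < L) :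
    ∀ n : ℕ, 2 ≤ n →
      ∑ i ∈ Finset.Icc 1 n, 1 / (a + i * L) ≤
        1 / (a + L) + 1 / (a + 2 * L) +
          (Real.log (a + n * L) - Real.log (a + 2 * L)) / L := by
  intro n hn
  induction n with
  | zero => omega
  | succ n ih =>
    rcases Nat.lt_or_ge n 2 with h2 | h2
    · interval_cases n
      · omega
      · rw [show Finset.Icc 1 2 = ({1, 2} : Finset ℕ) from rfl,
          Finset.sum_pair (by norm_num)]
        push_cast
        rw [sub_self, zero_div]
        rw [one_mul]
        linarith
    · rw [Finset.sum_Icc_succ_top (by omega : 1 ≤ n + 1)]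
      have hx : (0:ℝ) < a + n * L := by positivity
      have hxy : a + (n:ℝ) * L ≤ a + ((n:ℕ) + 1 : ℕ) * L := by push_cast; nlinarith
      have hy : (0:ℝ) < a + ((n:ℕ) + 1 : ℕ) * L := lt_of_lt_of_le hx hxy
      have h := logdiff hx hxy
      have hdiff : (a + ((n:ℕ) + 1 : ℕ) * L : ℝ) - (a + (n:ℝ) * L) = L := by
        push_cast; ring
      rw [hdiff] at h
      have key : 1 / (a + ((n:ℕ) + 1 : ℕ) * L : ℝ) ≤
          (Real.log (a + ((n:ℕ) + 1 : ℕ) * L) - Real.log (a + n * L)) / L := by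
        have e : 1 / (a + ((n:ℕ) + 1 : ℕ) * L : ℝ) =
            (L / (a + ((n:ℕ) + 1 : ℕ) * L)) / L := by field_simp
        rw [e]
        exact (div_le_div_iff_of_pos_right hL).mpr h
      have ih' := ih h2
      have hadd : (Real.log (a + ((n:ℕ) + 1 : ℕ) * L) - Real.log (a + n * L)) / L +
          (Real.log (a + (n:ℝ) * L) - Real.log (a + 2 * L)) / L =
          (Real.log (a + ((n:ℕ) + 1 : ℕ) * L) - Real.log (a + 2 * L)) / L := by
        push_cast
        rw [← add_div]
        ring_nf
      push_cast at key ih' hadd ⊢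
      linarith

theorem stmt16 (m : ℕ) (hm : 3 ≤ m) :
    ∑ i ∈ Finset.Icc 1 (m - 1), 1 / (Real.log (m - 1) + i * Real.log m) < 1 := by
  have hlog2 : (0.6931471803 : ℝ) < Real.log 2 := Real.log_two_gt_d9
  rcases Nat.lt_or_ge m 4 with h4 | h4
  · -- m = 3
    have hm3 : m = 3 := by omega
    subst hm3
    have h1 : (1:ℝ) < Real.log 3 := by
      have he : Real.exp 1 < 3 := by
        have := Real.exp_one_lt_d9
        linarith
      calc (1:ℝ) = Real.log (Real.exp 1) := (Real.log_exp 1).symm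
        _ < Real.log 3 := Real.log_lt_log (Real.exp_pos 1) he
    rw [show (3:ℕ) - 1 = 2 from rfl, show Finset.Icc 1 2 = ({1, 2} : Finset ℕ) from rfl,
      Finset.sum_pair (by norm_num)]
    push_cast
    rw [one_mul]
    have h3 : Real.log ((3:ℝ) - 1) = Real.log 2 := by norm_num
    rw [h3]
    set b := Real.log 2 with hb_def
    set c := Real.log 3 with hc_def
    have hb : (0:ℝ) < b := by linarith
    have hc : (0:ℝ) < c := by linarith
    have hd1 : (0:ℝ) < b + c := by linarith
    have hd2 : (0:ℝ) < b + 2 * c := by linarith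
    rw [div_add_div _ _ (ne_of_gt hd1) (ne_of_gt hd2), div_lt_one (by positivity)]
    nlinarith [hlog2, h1, mul_pos hb hc, sq_nonneg c]
  · -- m ≥ 4
    set a := Real.log ((m:ℝ) - 1) with ha_def
    set L := Real.log m with hL_def
    have hmR : (4:ℝ) ≤ (m:ℝ) := by exact_mod_cast h4
    have hm1 : (3:ℝ) ≤ (m:ℝ) - 1 := by linarith
    have ha : 0 < a := Real.log_pos (by linarith)
    have haL : a ≤ L := Real.log_le_log (by linarith) (by linarith)
    have hL : 0 < L := lt_of_lt_of_le ha haL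
    have hL4 : Real.log 4 ≤ L := Real.log_le_log (by norm_num) hmR
    have hlog4 : Real.log 4 = 2 * Real.log 2 := by
      rw [show (4:ℝ) = 2 * 2 by norm_num, Real.log_mul two_ne_zero two_ne_zero]; ring
    have hL' : (1.3862943606 : ℝ) < L := by rw [hlog4] at hL4; linarith
    have haL3 : L - 1/3 ≤ a := by
      have hx : (0:ℝ) < (m:ℝ) - 1 := by linarith
      have h := Real.log_le_sub_one_of_pos (show (0:ℝ) < (m:ℝ) / ((m:ℝ) - 1) by positivity)
      rw [Real.log_div (by linarith) (ne_of_gt hx)] at h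
      have h2 : (m:ℝ) / ((m:ℝ) - 1) - 1 = 1 / ((m:ℝ) - 1) := by field_simp; ring
      have h3 : (1:ℝ) / ((m:ℝ) - 1) ≤ 1/3 := by
        rw [div_le_div_iff₀ hx (by norm_num)]; linarith
      rw [h2] at h
      have hla : L - a ≤ 1/3 := by rw [ha_def, hL_def]; linarith
      linarith
    have hn : 2 ≤ m - 1 := by omega
    have htel := tele a L ha hL (m - 1) hn
    have hcast : ((m - 1 : ℕ) : ℝ) = (m:ℝ) - 1 := by
      have h1 : 1 ≤ m := by omega
      push_cast [h1]; ring
    rw [hcast] at htel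
    have hd1 : (0:ℝ) < a + L := by positivity
    have hd2 : (0:ℝ) < a + 2 * L := by positivity
    have hmL : a + ((m:ℝ) - 1) * L ≤ (m:ℝ) * L := by nlinarith
    have hub : Real.log (a + ((m:ℝ) - 1) * L) ≤ L + Real.log L := by
      calc Real.log (a + ((m:ℝ) - 1) * L) ≤ Real.log ((m:ℝ) * L) :=
            Real.log_le_log (by positivity) hmL
        _ = L + Real.log L := by rw [Real.log_mul (by positivity) (ne_of_gt hL)]
    have hlb : Real.log 2 + Real.log L + a / (a + 2 * L) ≤ Real.log (a + 2 * L) := by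
      have h := logdiff (show (0:ℝ) < 2 * L by positivity)
        (show 2 * L ≤ a + 2 * L by linarith)
      rw [Real.log_mul two_ne_zero (ne_of_gt hL)] at h
      have he : a + 2 * L - 2 * L = a := by ring
      rw [he] at h
      linarith
    -- final numeric inequality: L/(a+L) + (L-a)/(a+2L) < log 2
    have hnum : L / (a + L) + (L - a) / (a + 2 * L) < Real.log 2 := by
      rw [div_add_div _ _ (ne_of_gt hd1) (ne_of_gt hd2), div_lt_iff₀ (by positivity)]
      nlinarith [mul_pos hd1 hd2, sq_nonneg (L - a),
        mul_nonneg (show (0:ℝ) ≤ 1/3 - (L - a) by linarith)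
          (show (0:ℝ) ≤ L by linarith),
        mul_nonneg (show (0:ℝ) ≤ L - a by linarith)
          (show (0:ℝ) ≤ L by linarith),
        mul_pos (mul_pos hd1 hd2) (show (0:ℝ) < Real.log 2 - 0.6931471803 by linarith)]
    have e4 : 1 / (a + L) + 1 / (a + 2 * L) < (Real.log 2 + a / (a + 2 * L)) / L := by
      rw [lt_div_iff₀ hL]
      have h6 : (L - a) / (a + 2 * L) + a / (a + 2 * L) = L / (a + 2 * L) := by
        rw [← add_div]; ring_nf
      have h7 : (1 / (a + L) + 1 / (a + 2 * L)) * L = L / (a + L) + L / (a + 2 * L) := by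
        field_simp
      rw [h7]
      linarith
    have e1 : Real.log (a + ((m:ℝ) - 1) * L) - Real.log (a + 2 * L) ≤
        L - Real.log 2 - a / (a + 2 * L) := by linarith
    have e2 : (Real.log (a + ((m:ℝ) - 1) * L) - Real.log (a + 2 * L)) / L ≤
        (L - Real.log 2 - a / (a + 2 * L)) / L := (div_le_div_iff_of_pos_right hL).mpr e1
    have e3 : (L - Real.log 2 - a / (a + 2 * L)) / L =
        1 - (Real.log 2 + a / (a + 2 * L)) / L := by field_simp; ring
    calc ∑ i ∈ Finset.Icc 1 (m - 1), 1 / (a + i * L) ≤ _ := htel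
      _ < 1 := by rw [e3] at e2; linarith
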